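/- Let ρ : ℝⁿ → [0,∞) be integrable, let g : [0,∞) → [0,∞) be non-decreasing and locally integrable with N := ∫_{ℝⁿ} g(|x|) ρ(x) dx < ∞, and let ρ* denote the symmetric decreasing rearrangement of ρ. Define G(s) = ∫₀^s g(r) r^{n−1} dr. Then for every x ∈ ℝⁿ, ρ*(x) ≤ N / (|S^{n−1}| G(|x|)), where |S^{n−1}| is the surface measure of the unit sphere. -/

import Mathlib

open MeasureTheory
open scoped ENNReal

/-- The symmetric decreasing rearrangement of a nonnegative function `ρ` on `ℝⁿ`:
`ρ*(x) = sup{t ≥ 0 : |{ρ > t}| > |B(0,‖x‖)|}`. -/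
noncomputable def symmDecRearrangement (n : ℕ) (ρ : EuclideanSpace ℝ (Fin n) → ℝ)
    (x : EuclideanSpace ℝ (Fin n)) : ℝ :=
  sSup {t : ℝ | 0 ≤ t ∧
    volume (Metric.ball (0 : EuclideanSpace ℝ (Fin n)) ‖x‖) < volume {y | t < ρ y}}

open Set ENNReal in
/-- Bathtub principle (easy direction): among sets of measure at least `μ B`, the set `B`
minimizes `∫⁻ h` when `h ≤ c` on `B` and `h ≥ c` off `B`. -/
lemma bathtub_aux {α : Type*} [MeasurableSpace α] (μ : Measure α) {B A : Set α}
    (hB : MeasurableSet B) (hA : MeasurableSet A) (hμB : μ B ≠ ⊤) (hle : μ B ≤ μ A)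
    {h : α → ℝ≥0∞} (hh : Measurable h) {c : ℝ≥0∞}
    (hc1 : ∀ y ∈ B, h y ≤ c) (hc2 : ∀ y ∉ B, c ≤ h y) :
    ∫⁻ y in B, h y ∂μ ≤ ∫⁻ y in A, h y ∂μ := by
  have hBA : μ (B \ A) ≤ μ (A \ B) := by
    have h1 : μ (B ∩ A) + μ (B \ A) = μ B := measure_inter_add_diff B hA
    have h2 : μ (A ∩ B) + μ (A \ B) = μ A := measure_inter_add_diff A hB
    rw [Set.inter_comm] at h2
    have hfin : μ (B ∩ A) ≠ ⊤ := ne_top_of_le_ne_top hμB (measure_mono Set.inter_subset_left)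
    have h3 : μ (B ∩ A) + μ (B \ A) ≤ μ (B ∩ A) + μ (A \ B) := by
      rw [h1, h2]; exact hle
    exact (ENNReal.add_le_add_iff_left hfin).mp h3
  have hsplitB : ∫⁻ y in B, h y ∂μ = ∫⁻ y in B ∩ A, h y ∂μ + ∫⁻ y in B \ A, h y ∂μ :=
    (lintegral_inter_add_diff h B hA).symm
  have hsplitA : ∫⁻ y in A, h y ∂μ = ∫⁻ y in A ∩ B, h y ∂μ + ∫⁻ y in A \ B, h y ∂μ :=
    (lintegral_inter_add_diff h A hB).symm
  have step1 : ∫⁻ y in B \ A, h y ∂μ ≤ c * μ (B \ A) := by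
    calc ∫⁻ y in B \ A, h y ∂μ ≤ ∫⁻ _ in B \ A, c ∂μ :=
          setLIntegral_mono' (hB.diff hA) fun y hy => hc1 y hy.1
      _ = c * μ (B \ A) := setLIntegral_const _ _
  have step2 : c * μ (A \ B) ≤ ∫⁻ y in A \ B, h y ∂μ := by
    calc c * μ (A \ B) = ∫⁻ _ in A \ B, c ∂μ := (setLIntegral_const _ _).symm
      _ ≤ ∫⁻ y in A \ B, h y ∂μ :=
          setLIntegral_mono' (hA.diff hB) fun y hy => hc2 y hy.2
  calc ∫⁻ y in B, h y ∂μ = ∫⁻ y in B ∩ A, h y ∂μ + ∫⁻ y in B \ A, h y ∂μ := hsplitB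
    _ ≤ ∫⁻ y in B ∩ A, h y ∂μ + c * μ (B \ A) := by gcongr
    _ ≤ ∫⁻ y in B ∩ A, h y ∂μ + c * μ (A \ B) := by gcongr
    _ ≤ ∫⁻ y in B ∩ A, h y ∂μ + ∫⁻ y in A \ B, h y ∂μ := by gcongr
    _ = ∫⁻ y in A, h y ∂μ := by rw [Set.inter_comm]; exact hsplitA.symm

/-- Lieb's trick: if `N = ∫ g(|x|)ρ < ∞` with `g ≥ 0` non-decreasing locally
integrable, then `|S^{n-1}| G(|x|) ρ*(x) ≤ N`, i.e. `ρ*(x) ≤ N/(|S^{n-1}| G(|x|))`,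
where `G(s) = ∫₀^s g(r) r^{n-1} dr` and `|S^{n-1}| = n·|B₁|`. -/
theorem stmt18 (n : ℕ) (hn : 0 < n) (ρ : EuclideanSpace ℝ (Fin n) → ℝ) (g : ℝ → ℝ)
    (hm : Measurable ρ) (h0 : ∀ x, 0 ≤ ρ x) (hi : Integrable ρ)
    (hg0 : ∀ r, 0 ≤ g r) (hgm : MonotoneOn g (Set.Ici (0:ℝ)))
    (hgl : ∀ s : ℝ, 0 < s → IntegrableOn g (Set.Icc 0 s))
    (hN : Integrable (fun x : EuclideanSpace ℝ (Fin n) => g ‖x‖ * ρ x)) :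
    ∀ x : EuclideanSpace ℝ (Fin n),
      ((n : ℝ) * (volume (Metric.ball (0 : EuclideanSpace ℝ (Fin n)) 1)).toReal) *
          (∫ r in (0:ℝ)..‖x‖, g r * r ^ ((n : ℝ) - 1)) *
          symmDecRearrangement n ρ x
        ≤ ∫ x : EuclideanSpace ℝ (Fin n), g ‖x‖ * ρ x := by
  intro x
  haveI : Nontrivial (EuclideanSpace ℝ (Fin n)) :=
    Module.nontrivial_of_finrank_pos (R := ℝ)
      (by rw [finrank_euclideanSpace_fin]; exact hn)
  set R := ‖x‖ with hRdef
  have hR0 : (0:ℝ) ≤ R := norm_nonneg x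
  set gt' : ℝ → ℝ := fun r => g (max r 0) with hgt
  have hgtm : Monotone gt' := fun a b hab =>
    hgm (Set.mem_Ici.2 (le_max_right _ _)) (Set.mem_Ici.2 (le_max_right _ _))
      (max_le_max hab le_rfl)
  have hgteq : ∀ r : ℝ, 0 ≤ r → gt' r = g r := fun r hr => by
    simp only [hgt, max_eq_left hr]
  have hgt0 : ∀ r, 0 ≤ gt' r := fun r => hg0 _
  have hmeas : Measurable gt' := hgtm.measurable
  set N := ∫ y : EuclideanSpace ℝ (Fin n), g ‖y‖ * ρ y with hNdef
  have hN0 : 0 ≤ N := integral_nonneg fun y => mul_nonneg (hg0 _) (h0 _)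
  set C0 : ℝ := (n : ℝ) * (volume (Metric.ball (0 : EuclideanSpace ℝ (Fin n)) 1)).toReal with hC0def
  set Gv : ℝ := ∫ r in (0:ℝ)..R, g r * r ^ ((n : ℝ) - 1) with hGvdef
  have hGv0 : 0 ≤ Gv := intervalIntegral.integral_nonneg hR0
    (fun r hr => mul_nonneg (hg0 r) (Real.rpow_nonneg hr.1 _))
  have hC00 : 0 ≤ C0 := mul_nonneg (Nat.cast_nonneg n) ENNReal.toReal_nonneg
  set B : Set (EuclideanSpace ℝ (Fin n)) := Metric.ball (0 : EuclideanSpace ℝ (Fin n)) R with hBdef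
  -- the integral of gt'∘norm over the ball equals C0 * Gv
  have hInt : IntegrableOn (fun y : EuclideanSpace ℝ (Fin n) => gt' ‖y‖) B volume := by
    refine Integrable.mono' ((integrableOn_const (C := gt' R) measure_ball_lt_top.ne))
      ((hmeas.comp measurable_norm).aestronglyMeasurable.restrict) ?_
    filter_upwards [ae_restrict_mem measurableSet_ball] with y hy
    rw [Real.norm_eq_abs, abs_of_nonneg (hgt0 _)]
    exact hgtm (le_of_lt (by simpa [hBdef, mem_ball_zero_iff] using hy))
  have hball_eq : ∫ y in B, gt' ‖y‖ = C0 * Gv := by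
    set f : ℝ → ℝ := fun r => if r < R then gt' r else 0 with hfdef
    have hind : (fun y : EuclideanSpace ℝ (Fin n) => f ‖y‖) = B.indicator (fun y : EuclideanSpace ℝ (Fin n) => gt' ‖y‖) := by
      funext y
      by_cases hy : ‖y‖ < R
      · rw [Set.indicator_of_mem (by simpa [hBdef, mem_ball_zero_iff] using hy)]
        simp [hfdef, hy]
      · rw [Set.indicator_of_notMem (by simpa [hBdef, mem_ball_zero_iff] using hy)]
        simp [hfdef, hy]
    have hpolar := integral_fun_norm_addHaar (volume : Measure (EuclideanSpace ℝ (Fin n))) f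
    rw [finrank_euclideanSpace_fin] at hpolar
    have hinner : ∫ r in Set.Ioi (0:ℝ), r ^ (n - 1) • f r = Gv := by
      have h1 : (fun r : ℝ => r ^ (n - 1) • f r)
          = (Set.Iio R).indicator (fun r : ℝ => r ^ (n - 1) * gt' r) := by
        funext r
        by_cases hr : r < R
        · rw [Set.indicator_of_mem (Set.mem_Iio.2 hr)]; simp [hfdef, hr]
        · rw [Set.indicator_of_notMem (fun h' => hr (Set.mem_Iio.1 h'))]; simp [hfdef, hr]
      rw [h1, setIntegral_indicator measurableSet_Iio]
      have h2 : Set.Ioi (0:ℝ) ∩ Set.Iio R = Set.Ioo 0 R := rfl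
      rw [h2]
      have h3 : ∫ r in Set.Ioo (0:ℝ) R, r ^ (n - 1) * gt' r
          = ∫ r in Set.Ioo (0:ℝ) R, g r * r ^ ((n : ℝ) - 1) := by
        refine setIntegral_congr_fun measurableSet_Ioo fun r hr => ?_
        have hr0 : (0:ℝ) < r := hr.1
        rw [hgteq r hr0.le, mul_comm]
        congr 1
        rw [← Real.rpow_natCast r (n - 1), Nat.cast_sub hn, Nat.cast_one]
      rw [h3, hGvdef, intervalIntegral.integral_of_le hR0,
        ← setIntegral_congr_set MeasureTheory.Ioo_ae_eq_Ioc]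
    have hBint : ∫ y in B, gt' ‖y‖ = ∫ y : EuclideanSpace ℝ (Fin n), f ‖y‖ := by
      rw [hind, integral_indicator measurableSet_ball]
    rw [hBint, hpolar, hinner, nsmul_eq_mul, smul_eq_mul, hC0def, mul_assoc]; rfl
  -- key inequality for each t in the defining set
  have key : ∀ t : ℝ, 0 ≤ t → volume B < volume {y : EuclideanSpace ℝ (Fin n) | t < ρ y} → C0 * Gv * t ≤ N := by
    intro t ht0 htv
    set A : Set (EuclideanSpace ℝ (Fin n)) := {y : EuclideanSpace ℝ (Fin n) | t < ρ y} with hAdef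
    have hA : MeasurableSet A := measurableSet_lt measurable_const hm
    set h : EuclideanSpace ℝ (Fin n) → ℝ≥0∞ := fun y => ENNReal.ofReal (gt' ‖y‖) with hhdef
    have hh : Measurable h := ENNReal.measurable_ofReal.comp (hmeas.comp measurable_norm)
    have hbath : ∫⁻ y in B, h y ≤ ∫⁻ y in A, h y := by
      refine bathtub_aux volume measurableSet_ball hA measure_ball_lt_top.ne htv.le hh
        (c := ENNReal.ofReal (gt' R)) ?_ ?_
      · intro y hy
        exact ENNReal.ofReal_le_ofReal
          (hgtm (le_of_lt (by simpa [hBdef, mem_ball_zero_iff] using hy)))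
      · intro y hy
        exact ENNReal.ofReal_le_ofReal
          (hgtm (not_lt.mp (by simpa [hBdef, mem_ball_zero_iff] using hy)))
    have hBL : ∫⁻ y in B, h y = ENNReal.ofReal (C0 * Gv) := by
      rw [← hball_eq]
      exact (ofReal_integral_eq_lintegral_ofReal hInt
        (Filter.Eventually.of_forall fun y => hgt0 _)).symm
    have hNL : ∫⁻ y : EuclideanSpace ℝ (Fin n), ENNReal.ofReal (g ‖y‖ * ρ y) = ENNReal.ofReal N :=
      (ofReal_integral_eq_lintegral_ofReal hN
        (Filter.Eventually.of_forall fun y => mul_nonneg (hg0 _) (h0 _))).symm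
    have hAbound : (∫⁻ y in A, h y) * ENNReal.ofReal t ≤ ENNReal.ofReal N := by
      calc (∫⁻ y in A, h y) * ENNReal.ofReal t
          = ∫⁻ y in A, h y * ENNReal.ofReal t := (lintegral_mul_const _ hh).symm
        _ ≤ ∫⁻ y in A, ENNReal.ofReal (g ‖y‖ * ρ y) := by
            refine setLIntegral_mono' hA fun y hy => ?_
            have hy' : t < ρ y := hy
            simp only [hhdef]
            rw [hgteq _ (norm_nonneg y), ← ENNReal.ofReal_mul (hg0 _)]
            exact ENNReal.ofReal_le_ofReal
              (mul_le_mul_of_nonneg_left hy'.le (hg0 _))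
        _ ≤ ∫⁻ y : EuclideanSpace ℝ (Fin n), ENNReal.ofReal (g ‖y‖ * ρ y) := setLIntegral_le_lintegral _ _
        _ = ENNReal.ofReal N := hNL
    have : ENNReal.ofReal (C0 * Gv * t) ≤ ENNReal.ofReal N := by
      rw [ENNReal.ofReal_mul (mul_nonneg hC00 hGv0), ← hBL]
      exact le_trans (mul_le_mul_of_nonneg_right hbath bot_le) hAbound
    exact (ENNReal.ofReal_le_ofReal_iff hN0).mp this
  -- conclude via sSup
  rcases eq_or_lt_of_le (mul_nonneg hC00 hGv0) with hc | hc
  · rw [symmDecRearrangement, ← hc, zero_mul]; exact hN0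
  · have hsup : symmDecRearrangement n ρ x ≤ N / (C0 * Gv) := by
      refine Real.sSup_le (fun t ht => ?_) (div_nonneg hN0 hc.le)
      obtain ⟨ht0, htv⟩ := ht
      rw [le_div_iff₀ hc]
      have := key t ht0 htv
      linarith
    calc C0 * Gv * symmDecRearrangement n ρ x
        ≤ C0 * Gv * (N / (C0 * Gv)) := mul_le_mul_of_nonneg_left hsup hc.le
      _ = N := by rw [mul_comm, div_mul_cancel₀ N hc.ne']
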